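/- Let Δ > 0 and 0 < Δ_P ≤ Δ. Then for every real c ≤ −1 and all reals r, r̂ with 0 ≤ r̂ ≤ r < Δ and r − r̂ ≤ Δ_P, the index-rounding error of the ratio table satisfies |Q⁻(c, r) − Q⁻(c, r̂)| ≤ 1 − (2^{−(Δ−Δ_P)} + (Δ − Δ_P)·ln 2 − 1)/(2^{−Δ} + Δ·ln 2 − 1). -/

import Mathlib

/-- Φ⁻(x) = log₂(1 − 2^x) -/
noncomputable def Phim (x : ℝ) : ℝ := Real.logb 2 (1 - (2:ℝ) ^ x)

/-- (Φ⁻)'(x) = −2^x / (1 − 2^x) -/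
noncomputable def dPhim (x : ℝ) : ℝ := -(2:ℝ) ^ x / (1 - (2:ℝ) ^ x)

/-- First-order Taylor remainder E⁻(i, r) -/
noncomputable def Em (i r : ℝ) : ℝ := Phim (i - r) - Phim i + r * dPhim i

/-- Error ratio Q⁻(i, r) = E⁻(i, r)/E⁻(i, Δ) -/
noncomputable def Qm (Δ i r : ℝ) : ℝ := Em i r / Em i Δ

open Real Set

lemma rpow_lt_one' {x : ℝ} (hx : x < 0) : (2:ℝ) ^ x < 1 :=
  Real.rpow_lt_one_of_one_lt_of_neg one_lt_two hx

lemma one_sub_pos' {x : ℝ} (hx : x < 0) : 0 < 1 - (2:ℝ) ^ x := by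
  linarith [rpow_lt_one' hx]

lemma hasDerivAt_Phim {y : ℝ} (hy : y < 0) : HasDerivAt Phim (dPhim y) y := by
  have h2 : (0:ℝ) < 2 := by norm_num
  have hpos := one_sub_pos' hy
  have h1 : HasDerivAt (fun x : ℝ => 1 - (2:ℝ) ^ x) (-((2:ℝ) ^ y * Real.log 2)) y :=
    ((hasStrictDerivAt_const_rpow h2 y).hasDerivAt).const_sub 1
  have h3 : HasDerivAt (fun x : ℝ => Real.log (1 - (2:ℝ) ^ x))
      (-((2:ℝ) ^ y * Real.log 2) / (1 - (2:ℝ) ^ y)) y := h1.log hpos.ne'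
  have h4 := h3.div_const (Real.log 2)
  have : Phim = fun x : ℝ => Real.log (1 - (2:ℝ) ^ x) / Real.log 2 := by
    funext x; simp [Phim, Real.logb]
  rw [this]
  refine h4.congr_deriv ?_
  have hl2 : Real.log 2 ≠ 0 := by positivity
  rw [dPhim]
  field_simp

/-- derivative of r ↦ Em c r -/
noncomputable def Es (c x : ℝ) : ℝ := dPhim c - dPhim (c - x)

lemma hasDerivAt_Em {c x : ℝ} (hc : c < 0) (hcx : c - x < 0) :
    HasDerivAt (Em c) (Es c x) x := by
  have h1 : HasDerivAt (fun r : ℝ => c - r) (-1) x := by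
    simpa using (hasDerivAt_id x).const_sub c
  have h2 : HasDerivAt (fun r : ℝ => Phim (c - r)) (dPhim (c - x) * (-1)) x :=
    (hasDerivAt_Phim hcx).comp x h1
  have h3 : HasDerivAt (fun r : ℝ => Phim (c - r) - Phim c + r * dPhim c)
      (dPhim (c - x) * (-1) + 1 * dPhim c) x :=
    (h2.sub_const (Phim c)).add ((hasDerivAt_id x).mul_const (dPhim c))
  have : Em c = fun r : ℝ => Phim (c - r) - Phim c + r * dPhim c := rfl
  rw [this]; convert h3 using 1; simp [Es]; ring

noncomputable def Fm (s : ℝ) : ℝ := (2:ℝ) ^ (-s) + s * Real.log 2 - 1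

lemma hasDerivAt_Fm (x : ℝ) :
    HasDerivAt Fm (Real.log 2 * (1 - (2:ℝ) ^ (-x))) x := by
  have h2 : (0:ℝ) < 2 := by norm_num
  have h1 : HasDerivAt (fun s : ℝ => (2:ℝ) ^ (-s)) ((2:ℝ) ^ (-x) * Real.log 2 * (-1)) x :=
    ((hasStrictDerivAt_const_rpow h2 (-x)).hasDerivAt).comp x (hasDerivAt_neg x)
  have h3 : HasDerivAt Fm ((2:ℝ) ^ (-x) * Real.log 2 * (-1) + 1 * Real.log 2) x := by
    have : Fm = fun s : ℝ => (2:ℝ) ^ (-s) + s * Real.log 2 - 1 := rfl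
    rw [this]
    exact (h1.add ((hasDerivAt_id x).mul_const (Real.log 2))).sub_const 1
  convert h3 using 1; ring

/-- gm c x = Es c x / Fm' x explicitly -/
noncomputable def gm (c x : ℝ) : ℝ :=
  -(2:ℝ) ^ c / (Real.log 2 * ((1 - (2:ℝ) ^ c) * (1 - (2:ℝ) ^ (c - x))))

lemma Es_eq {c x : ℝ} (hc : c < 0) (hcx : c - x < 0) :
    Es c x = Real.log 2 * (1 - (2:ℝ) ^ (-x)) * gm c x := by
  have hl2 : (0:ℝ) < Real.log 2 := Real.log_pos one_lt_two
  have hv := one_sub_pos' hc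
  have hw := one_sub_pos' hcx
  have hsplit : (2:ℝ) ^ (c - x) = (2:ℝ) ^ c * (2:ℝ) ^ (-x) := by
    rw [← Real.rpow_add two_pos]; ring_nf
  rw [Es, dPhim, dPhim, gm]
  field_simp
  rw [hsplit]; ring

lemma gm_neg {c x : ℝ} (hc : c < 0) (hcx : c - x < 0) : gm c x < 0 := by
  have hl2 : (0:ℝ) < Real.log 2 := Real.log_pos one_lt_two
  have hv := one_sub_pos' hc
  have hw := one_sub_pos' hcx
  have hvpos : (0:ℝ) < (2:ℝ) ^ c := Real.rpow_pos_of_pos two_pos c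
  rw [gm]
  apply div_neg_of_neg_of_pos (by linarith) (by positivity)

lemma gm_mono {c x₁ x₂ : ℝ} (hc : c < 0) (hx1 : 0 ≤ x₁) (h12 : x₁ ≤ x₂) :
    gm c x₁ ≤ gm c x₂ := by
  have hl2 : (0:ℝ) < Real.log 2 := Real.log_pos one_lt_two
  have hv := one_sub_pos' hc
  have hw1 := one_sub_pos' (show c - x₁ < 0 by linarith)
  have hw2 := one_sub_pos' (show c - x₂ < 0 by linarith)
  have hvpos : (0:ℝ) < (2:ℝ) ^ c := Real.rpow_pos_of_pos two_pos c
  have hw : (2:ℝ) ^ (c - x₂) ≤ (2:ℝ) ^ (c - x₁) :=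
    Real.rpow_le_rpow_of_exponent_le one_le_two (by linarith)
  have hd : Real.log 2 * ((1 - (2:ℝ) ^ c) * (1 - (2:ℝ) ^ (c - x₁)))
      ≤ Real.log 2 * ((1 - (2:ℝ) ^ c) * (1 - (2:ℝ) ^ (c - x₂))) := by
    have h1 : (1 - (2:ℝ) ^ c) * (1 - (2:ℝ) ^ (c - x₁)) ≤ (1 - (2:ℝ) ^ c) * (1 - (2:ℝ) ^ (c - x₂)) :=
      mul_le_mul_of_nonneg_left (by linarith) hv.le
    exact mul_le_mul_of_nonneg_left h1 hl2.le
  have hd1 : (0:ℝ) < Real.log 2 * ((1 - (2:ℝ) ^ c) * (1 - (2:ℝ) ^ (c - x₁))) := by positivity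
  rw [gm, gm, neg_div, neg_div, neg_le_neg_iff]
  exact div_le_div_of_nonneg_left hvpos.le hd1 hd

lemma Fm_zero : Fm 0 = 0 := by simp [Fm]

lemma Em_zero (c : ℝ) : Em c 0 = 0 := by simp [Em]

lemma Fm_deriv_pos {x : ℝ} (hx : 0 < x) : 0 < Real.log 2 * (1 - (2:ℝ) ^ (-x)) := by
  have hl2 : (0:ℝ) < Real.log 2 := Real.log_pos one_lt_two
  have := one_sub_pos' (show -x < 0 by linarith)
  positivity

lemma Fm_lt {s t : ℝ} (hs : 0 ≤ s) (hst : s < t) : Fm s < Fm t := by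
  obtain ⟨θ, hθ, hθ'⟩ := exists_hasDerivAt_eq_slope Fm
    (fun x => Real.log 2 * (1 - (2:ℝ) ^ (-x))) hst
    (fun x _ => (hasDerivAt_Fm x).continuousAt.continuousWithinAt)
    (fun x _ => hasDerivAt_Fm x)
  have hθpos : 0 < θ := lt_of_le_of_lt hs hθ.1
  have := Fm_deriv_pos hθpos
  have hst' : 0 < t - s := by linarith
  nlinarith [(div_pos_iff.mp (hθ' ▸ this)).resolve_right (fun h => by linarith [h.2])]

lemma Em_sub_eq {c a b : ℝ} (hc : c < 0) (ha : 0 ≤ a) (hab : a < b) :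
    ∃ η ∈ Ioo a b, Em c b - Em c a = (Fm b - Fm a) * gm c η := by
  have hder : ∀ x ∈ Ioo a b, HasDerivAt (Em c) (Es c x) x := fun x hx =>
    hasDerivAt_Em hc (by have := hx.1; linarith)
  have hcont : ContinuousOn (Em c) (Icc a b) := fun x hx =>
    (hasDerivAt_Em hc (by have := hx.1; linarith)).continuousAt.continuousWithinAt
  have hcontF : ContinuousOn Fm (Icc a b) := fun x _ =>
    (hasDerivAt_Fm x).continuousAt.continuousWithinAt
  obtain ⟨η, hη, heq⟩ := exists_ratio_hasDerivAt_eq_ratio_slope Fm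
    (fun x => Real.log 2 * (1 - (2:ℝ) ^ (-x))) hab hcontF
    (fun x _ => hasDerivAt_Fm x) (Em c) (Es c) hcont hder
  refine ⟨η, hη, ?_⟩
  have hηpos : 0 < η := lt_of_le_of_lt ha hη.1
  have hF' : (0:ℝ) < Real.log 2 * (1 - (2:ℝ) ^ (-η)) := Fm_deriv_pos hηpos
  have hEs : Es c η = Real.log 2 * (1 - (2:ℝ) ^ (-η)) * gm c η :=
    Es_eq hc (by have := hη.1; linarith)
  rw [hEs] at heq
  have := mul_left_cancel₀ hF'.ne' (by linarith [heq] : Real.log 2 * (1 - (2:ℝ) ^ (-η)) * (Em c b - Em c a) = Real.log 2 * (1 - (2:ℝ) ^ (-η)) * ((Fm b - Fm a) * gm c η))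
  exact this

lemma Em_eq {c s : ℝ} (hc : c < 0) (hs : 0 < s) :
    ∃ ξ ∈ Ioo 0 s, Em c s = Fm s * gm c ξ := by
  obtain ⟨ξ, hξ, h⟩ := Em_sub_eq hc le_rfl hs
  exact ⟨ξ, hξ, by simpa [Em_zero, Fm_zero] using h⟩

lemma Em_neg {c s : ℝ} (hc : c < 0) (hs : 0 < s) : Em c s < 0 := by
  obtain ⟨ξ, hξ, h⟩ := Em_eq hc hs
  have hF : 0 < Fm s := by simpa [Fm_zero] using Fm_lt le_rfl hs
  have hg : gm c ξ < 0 := gm_neg hc (by have := hξ.1; linarith)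
  rw [h]; exact mul_neg_of_pos_of_neg hF hg

/-- Key lower bound: Em c s * Fm Δ ≤ Em c Δ * Fm s for 0 ≤ s ≤ Δ -/
lemma key {c s Δ : ℝ} (hc : c < 0) (hs : 0 ≤ s) (hsΔ : s ≤ Δ) :
    Em c s * Fm Δ ≤ Em c Δ * Fm s := by
  rcases eq_or_lt_of_le hs with h0 | hspos
  · simp [← h0, Em_zero, Fm_zero]
  rcases eq_or_lt_of_le hsΔ with hΔ | hsΔ'
  · rw [hΔ]
  obtain ⟨ξ, hξ, hEs⟩ := Em_eq hc hspos
  obtain ⟨η, hη, hEΔ⟩ := Em_sub_eq hc hspos.le hsΔ'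
  have hgg : gm c ξ ≤ gm c η := gm_mono hc hξ.1.le (le_of_lt (hξ.2.trans hη.1))
  have hFs : 0 < Fm s := by simpa [Fm_zero] using Fm_lt le_rfl hspos
  have hFΔ : Fm s < Fm Δ := Fm_lt hspos.le hsΔ'
  have hEΔ' : Em c Δ = Fm s * gm c ξ + (Fm Δ - Fm s) * gm c η := by
    rw [← hEs]; linarith
  rw [hEs, hEΔ']
  nlinarith [mul_le_mul_of_nonneg_left hgg (le_of_lt (sub_pos.mpr hFΔ))]

lemma Es_anti {c x₁ x₂ : ℝ} (hc : c < 0) (hx1 : 0 ≤ x₁) (h12 : x₁ ≤ x₂) :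
    Es c x₂ ≤ Es c x₁ := by
  have hw1 := one_sub_pos' (show c - x₁ < 0 by linarith)
  have hw2 := one_sub_pos' (show c - x₂ < 0 by linarith)
  have hw : (2:ℝ) ^ (c - x₂) ≤ (2:ℝ) ^ (c - x₁) :=
    Real.rpow_le_rpow_of_exponent_le one_le_two (by linarith)
  have hw2p : (0:ℝ) < (2:ℝ) ^ (c - x₂) := Real.rpow_pos_of_pos two_pos _
  rw [Es, Es, dPhim, dPhim, dPhim]
  rw [sub_le_sub_iff_left, neg_div, neg_div, neg_le_neg_iff, div_le_div_iff₀ hw2 hw1]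
  nlinarith

lemma Es_nonpos {c x : ℝ} (hc : c < 0) (hx : 0 ≤ x) : Es c x ≤ 0 := by
  have h := Es_anti hc le_rfl hx
  simpa [Es] using h

lemma Em_anti {c a b : ℝ} (hc : c < 0) (ha : 0 ≤ a) (hab : a ≤ b) :
    Em c b ≤ Em c a := by
  rcases eq_or_lt_of_le hab with h | h
  · rw [h]
  obtain ⟨θ, hθ, hθ'⟩ := exists_hasDerivAt_eq_slope (Em c) (Es c) h
    (fun x hx => (hasDerivAt_Em hc (by have := hx.1; linarith)).continuousAt.continuousWithinAt)
    (fun x hx => hasDerivAt_Em hc (by have := hx.1; linarith))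
  have h1 : Es c θ ≤ 0 := Es_nonpos hc (by have := hθ.1; linarith)
  have h2 : 0 < b - a := by linarith
  nlinarith [(div_nonpos_iff.mp (hθ' ▸ h1)).resolve_left (fun hcon => by linarith [hcon.2])]

/-- shift lemma: increments of Em over right-shifted intervals are more negative -/
lemma Em_shift {c h a b : ℝ} (hc : c < 0) (hh : 0 ≤ h) (ha : 0 ≤ a) (hab : a ≤ b) :
    Em c (b + h) - Em c b ≤ Em c (a + h) - Em c a := by
  rcases eq_or_lt_of_le hab with heq | hab'
  · rw [heq]
  set ψ : ℝ → ℝ := fun x => Em c (x + h) - Em c x with hψ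
  have hder : ∀ x, 0 ≤ x → HasDerivAt ψ (Es c (x + h) - Es c x) x := by
    intro x hx
    have h1 : HasDerivAt (fun y : ℝ => Em c (y + h)) (Es c (x + h) * 1) x :=
      (hasDerivAt_Em hc (by linarith)).comp x ((hasDerivAt_id x).add_const h)
    have := h1.sub (hasDerivAt_Em hc (by linarith : c - x < 0)); rw [mul_one] at this; exact this
  obtain ⟨θ, hθ, hθ'⟩ := exists_hasDerivAt_eq_slope ψ (fun x => Es c (x + h) - Es c x) hab'
    (fun x hx => (hder x (by have := hx.1; linarith)).continuousAt.continuousWithinAt)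
    (fun x hx => hder x (by have := hx.1; linarith))
  have h1 : Es c (θ + h) - Es c θ ≤ 0 := by
    have := Es_anti hc (by have := hθ.1; linarith : (0:ℝ) ≤ θ) (by linarith : θ ≤ θ + h)
    linarith
  have h2 : 0 < b - a := by linarith
  have h3 : ψ b - ψ a ≤ 0 := by
    nlinarith [(div_nonpos_iff.mp (hθ' ▸ h1)).resolve_left (fun hcon => by linarith [hcon.2])]
  have := h3; simp only [hψ] at this; linarith

theorem stmt_13 (Δ ΔP : ℝ) (hΔ : 0 < Δ) (hΔP : 0 < ΔP) (hΔPΔ : ΔP ≤ Δ) :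
    ∀ c r rhat : ℝ, c ≤ -1 → 0 ≤ rhat → rhat ≤ r → r < Δ → r - rhat ≤ ΔP →
      |Qm Δ c r - Qm Δ c rhat| ≤
        1 - ((2:ℝ) ^ (-(Δ - ΔP)) + (Δ - ΔP) * Real.log 2 - 1) /
            ((2:ℝ) ^ (-Δ) + Δ * Real.log 2 - 1) := by
  intro c r rhat hc hrhat hrr hrΔ hrΔP
  have hc0 : c < 0 := by linarith
  set h := r - rhat with hh
  have hh0 : 0 ≤ h := by linarith
  have hEΔ : Em c Δ < 0 := Em_neg hc0 hΔ
  have hEΔ' : Em c Δ ≠ 0 := hEΔ.ne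
  -- numerator comparisons
  have hshift : Em c ((Δ - h) + h) - Em c (Δ - h) ≤ Em c (rhat + h) - Em c rhat :=
    Em_shift hc0 hh0 hrhat (by linarith)
  have hshift' : Em c Δ - Em c (Δ - h) ≤ Em c r - Em c rhat := by
    have e1 : (Δ - h) + h = Δ := by ring
    have e2 : rhat + h = r := by rw [hh]; ring
    rwa [e1, e2] at hshift
  have hmono : Em c (Δ - h) ≤ Em c (Δ - ΔP) := Em_anti hc0 (by linarith) (by linarith)
  have hM : Em c Δ - Em c (Δ - ΔP) ≤ Em c r - Em c rhat := by linarith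
  -- sign of the difference
  have hNle : Em c r - Em c rhat ≤ 0 := by
    have := Em_anti hc0 hrhat hrr; linarith
  have hQdiff : Qm Δ c r - Qm Δ c rhat = (Em c r - Em c rhat) / Em c Δ := by
    rw [Qm, Qm, div_sub_div_same]
  have hQnonneg : 0 ≤ Qm Δ c r - Qm Δ c rhat := by
    rw [hQdiff]; exact div_nonneg_of_nonpos hNle hEΔ.le
  rw [abs_of_nonneg hQnonneg, hQdiff]
  -- step 1: bound by (Em c Δ - Em c (Δ-ΔP)) / Em c Δ
  have step1 : (Em c r - Em c rhat) / Em c Δ ≤ (Em c Δ - Em c (Δ - ΔP)) / Em c Δ :=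
    (div_le_div_right_of_neg hEΔ).mpr hM
  -- step 2: key lower bound
  have hs0 : (0:ℝ) ≤ Δ - ΔP := by linarith
  have hkey := key hc0 hs0 (by linarith : Δ - ΔP ≤ Δ)
  have hFΔ : 0 < Fm Δ := by simpa [Fm_zero] using Fm_lt le_rfl hΔ
  have hEs : Em c (Δ - ΔP) ≤ 0 := by
    rcases eq_or_lt_of_le hs0 with h0 | h0
    · rw [← h0]; simp [Em_zero]
    · exact (Em_neg hc0 h0).le
  have step2 : Fm (Δ - ΔP) / Fm Δ ≤ Em c (Δ - ΔP) / Em c Δ := by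
    have : Em c (Δ - ΔP) / Em c Δ = (-(Em c (Δ - ΔP))) / (-(Em c Δ)) := by
      rw [neg_div_neg_eq]
    rw [this, div_le_div_iff₀ hFΔ (by linarith : (0:ℝ) < -(Em c Δ))]
    nlinarith
  have hrhs : ((2:ℝ) ^ (-(Δ - ΔP)) + (Δ - ΔP) * Real.log 2 - 1) /
      ((2:ℝ) ^ (-Δ) + Δ * Real.log 2 - 1) = Fm (Δ - ΔP) / Fm Δ := rfl
  rw [hrhs]
  have expand : (Em c Δ - Em c (Δ - ΔP)) / Em c Δ = 1 - Em c (Δ - ΔP) / Em c Δ := by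
    field_simp
  linarith [step1, step2, expand ▸ step1]
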